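/- arXiv:2510.22790 — 2 statements merged into one kernel-verified Lean document; each statement's English description precedes it below -/
import Mathlib

section
/- Let E(P) = {x : xᵀPx ≤ 1} with P symmetric positive definite, and consider the closed-loop linear system ẋ = (A+BK)x + Ed with disturbances ‖d‖₂ ≤ 1. If xᵀP((A+BK)x + Ed) ≤ 0 for all x with xᵀPx = 1 and all d with ‖d‖₂ ≤ 1, then any absolutely continuous solution x(t) of the differential inclusion with x(0) ∈ E(P) satisfies x(t) ∈ E(P) for all t ≥ 0. -/
open Matrix MeasureTheory

open Set intervalIntegral

lemma key_swap {s t : ℝ} (hst : s ≤ t) {u w : ℝ → ℝ}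
    (hu : ∀ a b : ℝ, IntervalIntegrable u volume a b)
    (hw : ∀ a b : ℝ, IntervalIntegrable w volume a b) :
    (∫ τ in Ioc s t, u τ * (∫ b in Ioc s τ, w b))
      + ∫ b in Ioc s t, (∫ τ in Ioc s b, u τ) * w b
    = (∫ τ in Ioc s t, u τ) * (∫ b in Ioc s t, w b) := by
  set μ := volume.restrict (Ioc s t) with hμ
  have hu' : Integrable u μ := (intervalIntegrable_iff_integrableOn_Ioc_of_le hst).1 (hu s t)
  have hw' : Integrable w μ := (intervalIntegrable_iff_integrableOn_Ioc_of_le hst).1 (hw s t)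
  have hmeas : MeasurableSet {p : ℝ × ℝ | p.2 ≤ p.1} :=
    (isClosed_le continuous_snd continuous_fst).measurableSet
  set Φ : ℝ → ℝ → ℝ := fun τ b => Set.indicator {p : ℝ × ℝ | p.2 ≤ p.1} (fun p => u p.1 * w p.2) (τ, b) with hΦ
  have hint : Integrable (Function.uncurry Φ) (μ.prod μ) := by
    have h2 : Integrable (fun z : ℝ × ℝ => u z.1 * w z.2) (μ.prod μ) := hu'.mul_prod hw'
    exact h2.indicator hmeas
  have hswap := MeasureTheory.integral_integral_swap hint
  have hL : (∫ τ, ∫ b, Φ τ b ∂μ ∂μ) = ∫ τ in Ioc s t, u τ * (∫ b in Ioc s τ, w b) := by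
    rw [hμ]
    refine setIntegral_congr_fun measurableSet_Ioc (fun τ hτ => ?_)
    have h3 : (fun b => Φ τ b) = Set.indicator (Iic τ) (fun b => u τ * w b) := by
      funext b; simp [hΦ, Set.indicator_apply, Set.mem_Iic]
    rw [h3, setIntegral_indicator measurableSet_Iic]
    have hset : Ioc s t ∩ Iic τ = Ioc s τ := by
      ext b; simp only [mem_inter_iff, mem_Ioc, mem_Iic]
      exact ⟨fun h => ⟨h.1.1, h.2⟩, fun h => ⟨⟨h.1, h.2.trans hτ.2⟩, h.2⟩⟩
    rw [hset, MeasureTheory.integral_const_mul]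
  have hR : (∫ b, ∫ τ, Φ τ b ∂μ ∂μ)
      = ∫ b in Ioc s t, ((∫ τ in Ioc s t, u τ) - (∫ τ in Ioc s b, u τ)) * w b := by
    rw [hμ]
    refine setIntegral_congr_fun measurableSet_Ioc (fun b hb => ?_)
    have h3 : (fun τ => Φ τ b) = Set.indicator (Ici b) (fun τ => u τ * w b) := by
      funext τ; simp [hΦ, Set.indicator_apply, Set.mem_Ici]
    rw [h3, setIntegral_indicator measurableSet_Ici]
    have hset : Ioc s t ∩ Ici b = Icc b t := by
      ext τ; simp only [mem_inter_iff, mem_Ioc, mem_Ici, mem_Icc]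
      exact ⟨fun h => ⟨h.2, h.1.2⟩, fun h => ⟨⟨hb.1.trans_le h.1, h.2⟩, h.1⟩⟩
    rw [hset, MeasureTheory.integral_mul_const, integral_Icc_eq_integral_Ioc]
    congr 1
    have h1 : (∫ τ in s..b, u τ) + (∫ τ in b..t, u τ) = ∫ τ in s..t, u τ :=
      integral_add_adjacent_intervals (hu s b) (hu b t)
    have e1 : (∫ τ in Ioc b t, u τ) = ∫ τ in b..t, u τ := (integral_of_le hb.2).symm
    have e2 : (∫ τ in Ioc s b, u τ) = ∫ τ in s..b, u τ := (integral_of_le hb.1.le).symm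
    have e3 : (∫ τ in Ioc s t, u τ) = ∫ τ in s..t, u τ := (integral_of_le hst).symm
    rw [e1, e2, e3]; linarith
  rw [hL, hR] at hswap
  have hsub : ∫ b in Ioc s t, ((∫ τ in Ioc s t, u τ) - (∫ τ in Ioc s b, u τ)) * w b
      = (∫ τ in Ioc s t, u τ) * (∫ b in Ioc s t, w b) - ∫ b in Ioc s t, (∫ τ in Ioc s b, u τ) * w b := by
    have hU : Continuous fun b => ∫ τ in s..b, u τ := intervalIntegral.continuous_primitive hu s
    have hUw : Integrable (fun b => (∫ τ in Ioc s b, u τ) * w b) μ := by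
      have : IntervalIntegrable (fun b => (∫ τ in s..b, u τ) * w b) volume s t :=
        (hw s t).continuousOn_mul hU.continuousOn
      have h4 := (intervalIntegrable_iff_integrableOn_Ioc_of_le hst).1 this
      rw [hμ]
      refine h4.congr_fun (fun b hb => ?_) measurableSet_Ioc
      dsimp only
      rw [integral_of_le hb.1.le]
    have hcw : Integrable (fun b => (∫ τ in Ioc s t, u τ) * w b) μ := hw'.const_mul _
    have : (fun b => ((∫ τ in Ioc s t, u τ) - (∫ τ in Ioc s b, u τ)) * w b)
        = fun b => (∫ τ in Ioc s t, u τ) * w b - (∫ τ in Ioc s b, u τ) * w b := by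
      funext b; ring
    rw [this, integral_sub hcw hUw, MeasureTheory.integral_const_mul]
  rw [hsub] at hswap
  linarith

lemma prod_ftc {u w : ℝ → ℝ} (hu : ∀ a b : ℝ, IntervalIntegrable u volume a b)
    (hw : ∀ a b : ℝ, IntervalIntegrable w volume a b) {s t : ℝ} (hst : s ≤ t)
    {f g : ℝ → ℝ} (hf : ∀ r, f r = f s + ∫ τ in s..r, u τ)
    (hg : ∀ r, g r = g s + ∫ τ in s..r, w τ) :
    f t * g t - f s * g s = ∫ τ in s..t, (u τ * g τ + f τ * w τ) := by
  set U : ℝ → ℝ := fun r => ∫ τ in s..r, u τ with hU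
  set W : ℝ → ℝ := fun r => ∫ τ in s..r, w τ with hW
  have hUc : Continuous U := intervalIntegral.continuous_primitive hu s
  have hWc : Continuous W := intervalIntegral.continuous_primitive hw s
  -- KEY
  have KEY : ∫ τ in s..t, (u τ * W τ + U τ * w τ) = U t * W t := by
    have h1 : IntervalIntegrable (fun τ => u τ * W τ) volume s t :=
      (hu s t).mul_continuousOn hWc.continuousOn
    have h2 : IntervalIntegrable (fun τ => U τ * w τ) volume s t :=
      (hw s t).continuousOn_mul hUc.continuousOn
    rw [intervalIntegral.integral_add h1 h2]
    have hk := key_swap hst hu hw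
    have eL : (∫ τ in Ioc s t, u τ * (∫ b in Ioc s τ, w b)) = ∫ τ in s..t, u τ * W τ := by
      rw [integral_of_le hst]
      refine setIntegral_congr_fun measurableSet_Ioc (fun τ hτ => ?_)
      show u τ * ∫ b in Ioc s τ, w b = u τ * ∫ b in s..τ, w b
      rw [integral_of_le hτ.1.le]
    have eR : (∫ b in Ioc s t, (∫ τ in Ioc s b, u τ) * w b) = ∫ τ in s..t, U τ * w τ := by
      rw [integral_of_le hst]
      refine setIntegral_congr_fun measurableSet_Ioc (fun b hb => ?_)
      show (∫ τ in Ioc s b, u τ) * w b = (∫ τ in s..b, u τ) * w b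
      rw [integral_of_le hb.1.le]
    have eU : (∫ τ in Ioc s t, u τ) = U t := (integral_of_le hst).symm
    have eW : (∫ b in Ioc s t, w b) = W t := (integral_of_le hst).symm
    rw [eL, eR, eU, eW] at hk
    exact hk
  have hsplit : (fun τ => u τ * g τ + f τ * w τ)
      = fun τ => (u τ * g s + f s * w τ) + (u τ * W τ + U τ * w τ) := by
    funext τ; rw [hf τ, hg τ]; ring
  have i1 : IntervalIntegrable (fun τ => u τ * g s) volume s t := (hu s t).mul_const _
  have i2 : IntervalIntegrable (fun τ => f s * w τ) volume s t := (hw s t).const_mul _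
  have i3 : IntervalIntegrable (fun τ => u τ * W τ) volume s t :=
    (hu s t).mul_continuousOn hWc.continuousOn
  have i4 : IntervalIntegrable (fun τ => U τ * w τ) volume s t :=
    (hw s t).continuousOn_mul hUc.continuousOn
  rw [hsplit, intervalIntegral.integral_add (i1.add i2) (i3.add i4),
    intervalIntegral.integral_add i1 i2, KEY,
    intervalIntegral.integral_mul_const, intervalIntegral.integral_const_mul]
  rw [hf t, hg t]
  show (f s + U t) * (g s + W t) - f s * g s = U t * g s + f s * W t + U t * W t
  ring

lemma quad_ftc {n : ℕ} (P : Matrix (Fin n) (Fin n) ℝ)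
    {x v : ℝ → Fin n → ℝ} (hv : ∀ a b : ℝ, IntervalIntegrable v volume a b)
    (hsol : ∀ r : ℝ, x r = x 0 + ∫ τ in (0:ℝ)..r, v τ) {s t : ℝ} (hst : s ≤ t) :
    (x t ⬝ᵥ P.mulVec (x t)) - (x s ⬝ᵥ P.mulVec (x s))
      = ∫ τ in s..t, (v τ ⬝ᵥ P.mulVec (x τ) + x τ ⬝ᵥ P.mulVec (v τ)) := by
  have hvi : ∀ (i : Fin n) (a b : ℝ), IntervalIntegrable (fun τ => v τ i) volume a b := by
    intro i a b
    exact ⟨(ContinuousLinearMap.proj (R := ℝ) (φ := fun _ : Fin n => ℝ) i).integrable_comp (hv a b).1,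
      (ContinuousLinearMap.proj (R := ℝ) (φ := fun _ : Fin n => ℝ) i).integrable_comp (hv a b).2⟩
  have hx : Continuous x := by
    have : x = fun r => x 0 + ∫ τ in (0:ℝ)..r, v τ := funext hsol
    rw [this]
    exact continuous_const.add (intervalIntegral.continuous_primitive hv 0)
  have hxi : ∀ i : Fin n, Continuous (fun τ => x τ i) := fun i => (continuous_apply i).comp hx
  have hfi : ∀ (i : Fin n) (r : ℝ), x r i = x s i + ∫ τ in s..r, v τ i := by
    intro i r
    have h1 : x r = x s + ∫ τ in s..r, v τ := by
      rw [hsol r, hsol s]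
      have := intervalIntegral.integral_add_adjacent_intervals (hv 0 s) (hv s r)
      rw [← this]; abel
    have h2 : (∫ τ in s..r, v τ) i = ∫ τ in s..r, v τ i := by
      have := (ContinuousLinearMap.proj (R := ℝ) (φ := fun _ : Fin n => ℝ) i).intervalIntegral_comp_comm (hv s r)
      exact this.symm
    rw [h1]; simp [h2]
  have expand : ∀ a b : Fin n → ℝ, a ⬝ᵥ P.mulVec b = ∑ i, ∑ j, a i * (P i j * b j) := by
    intro a b; simp [dotProduct, Matrix.mulVec, Finset.mul_sum]
  have hint1 : ∀ (i j : Fin n), IntervalIntegrable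
      (fun τ => v τ i * (P i j * x τ j) + x τ i * (P i j * v τ j)) volume s t := by
    intro i j
    exact ((hvi i s t).mul_continuousOn
        ((continuous_const.mul (hxi j)).continuousOn)).add
      (((hvi j s t).const_mul (P i j)).continuousOn_mul (hxi i).continuousOn)
  have hterm : ∀ (i j : Fin n),
      (∫ τ in s..t, (v τ i * (P i j * x τ j) + x τ i * (P i j * v τ j)))
        = P i j * (x t i * x t j - x s i * x s j) := by
    intro i j
    have hpf := prod_ftc (hvi i) (hvi j) hst (f := fun τ => x τ i) (g := fun τ => x τ j)
      (fun r => hfi i r) (fun r => hfi j r)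
    have : (fun τ => v τ i * (P i j * x τ j) + x τ i * (P i j * v τ j))
        = fun τ => P i j * (v τ i * x τ j + x τ i * v τ j) := by funext τ; ring
    rw [this, intervalIntegral.integral_const_mul, ← hpf]
  calc (x t ⬝ᵥ P.mulVec (x t)) - (x s ⬝ᵥ P.mulVec (x s))
      = ∑ i, ∑ j, P i j * (x t i * x t j - x s i * x s j) := by
        rw [expand, expand, ← Finset.sum_sub_distrib]
        refine Finset.sum_congr rfl (fun i _ => ?_)
        rw [← Finset.sum_sub_distrib]
        exact Finset.sum_congr rfl (fun j _ => by ring)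
    _ = ∑ i, ∑ j, ∫ τ in s..t, (v τ i * (P i j * x τ j) + x τ i * (P i j * v τ j)) := by
        exact Finset.sum_congr rfl (fun i _ => Finset.sum_congr rfl (fun j _ => (hterm i j).symm))
    _ = ∫ τ in s..t, (v τ ⬝ᵥ P.mulVec (x τ) + x τ ⬝ᵥ P.mulVec (v τ)) := by
        have hsum : ∀ i : Fin n, IntervalIntegrable
            (fun τ => ∑ j, (v τ i * (P i j * x τ j) + x τ i * (P i j * v τ j))) volume s t := by
          intro i
          have h5 := IntervalIntegrable.sum Finset.univ (fun j _ => hint1 i j)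
          have h6 : (∑ j : Fin n, fun τ => (v τ i * (P i j * x τ j) + x τ i * (P i j * v τ j)))
              = fun τ => ∑ j, (v τ i * (P i j * x τ j) + x τ i * (P i j * v τ j)) :=
            funext fun τ => by simp
          rwa [h6] at h5
        have hswap2 : ∀ i, (∑ j, ∫ τ in s..t, (v τ i * (P i j * x τ j) + x τ i * (P i j * v τ j)))
            = ∫ τ in s..t, ∑ j, (v τ i * (P i j * x τ j) + x τ i * (P i j * v τ j)) :=
          fun i => (intervalIntegral.integral_finset_sum (fun j _ => hint1 i j)).symm
        rw [Finset.sum_congr rfl (fun i _ => hswap2 i),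
          ← intervalIntegral.integral_finset_sum (fun i (_ : i ∈ Finset.univ) => hsum i)]
        congr 1
        funext τ
        rw [expand, expand]
        simp [Finset.sum_add_distrib]

/-- If xᵀP((A+BK)x + Ed) ≤ 0 on the boundary of the ellipsoid E(P) for all
admissible disturbances, then E(P) is forward invariant for absolutely
continuous solutions of the closed-loop differential inclusion. -/
theorem ellipsoid_forward_invariance {n m p : ℕ}
    (A : Matrix (Fin n) (Fin n) ℝ) (B : Matrix (Fin n) (Fin m) ℝ)
    (E : Matrix (Fin n) (Fin p) ℝ) (K : Matrix (Fin m) (Fin n) ℝ)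
    (P : Matrix (Fin n) (Fin n) ℝ) (hP : P.PosDef)
    (hinv : ∀ x : Fin n → ℝ, x ⬝ᵥ P.mulVec x = 1 →
      ∀ d : Fin p → ℝ, d ⬝ᵥ d ≤ 1 →
        x ⬝ᵥ P.mulVec ((A + B * K).mulVec x + E.mulVec d) ≤ 0)
    -- an absolutely continuous solution: x is the integral of a locally
    -- integrable velocity v, which a.e. satisfies the closed-loop dynamics
    -- for some measurable disturbance d with ‖d(t)‖₂ ≤ 1
    (x : ℝ → (Fin n → ℝ)) (v : ℝ → (Fin n → ℝ)) (d : ℝ → (Fin p → ℝ))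
    (hd_meas : Measurable d) (hd_bnd : ∀ t, (d t) ⬝ᵥ (d t) ≤ 1)
    (hv_int : ∀ t : ℝ, IntervalIntegrable v volume 0 t)
    (hsol : ∀ t : ℝ, x t = x 0 + ∫ s in (0 : ℝ)..t, v s)
    (hdyn : ∀ᵐ t : ℝ, v t = (A + B * K).mulVec (x t) + E.mulVec (d t))
    (hx0 : (x 0) ⬝ᵥ P.mulVec (x 0) ≤ 1) :
    ∀ t ≥ (0 : ℝ), (x t) ⬝ᵥ P.mulVec (x t) ≤ 1 := by
  -- symmetry of P
  have hsymm : ∀ i j, P i j = P j i := by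
    intro i j
    have := congrFun (congrFun hP.1.eq j) i
    simpa [Matrix.conjTranspose_apply] using this
  have hdot : ∀ a b : Fin n → ℝ, a ⬝ᵥ P.mulVec b = b ⬝ᵥ P.mulVec a := by
    intro a b
    simp only [dotProduct, Matrix.mulVec, Finset.mul_sum]
    rw [Finset.sum_comm]
    exact Finset.sum_congr rfl fun i _ => Finset.sum_congr rfl fun j _ => by
      rw [hsymm j i]; ring
  -- extension of the boundary condition to the exterior
  have hext : ∀ z : Fin n → ℝ, 1 ≤ z ⬝ᵥ P.mulVec z → ∀ dd : Fin p → ℝ, dd ⬝ᵥ dd ≤ 1 →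
      z ⬝ᵥ P.mulVec ((A + B * K).mulVec z + E.mulVec dd) ≤ 0 := by
    intro z hz dd hdd
    set c := z ⬝ᵥ P.mulVec z with hc
    have hc0 : (0:ℝ) < c := lt_of_lt_of_le one_pos hz
    set r := Real.sqrt c with hrdef
    have hr1 : 1 ≤ r := by
      rw [show (1:ℝ) = Real.sqrt 1 by simp]
      exact Real.sqrt_le_sqrt hz
    have hr0 : (0:ℝ) < r := lt_of_lt_of_le one_pos hr1
    have hrr : r * r = c := Real.mul_self_sqrt hc0.le
    have hq : r * r⁻¹ = 1 := mul_inv_cancel₀ hr0.ne'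
    set y := r⁻¹ • z with hy
    have hy1 : y ⬝ᵥ P.mulVec y = 1 := by
      rw [hy, Matrix.mulVec_smul, smul_dotProduct, dotProduct_smul,
        smul_eq_mul, smul_eq_mul, ← hc]
      field_simp
      linarith [hrr]
    set a := z ⬝ᵥ P.mulVec ((A + B * K).mulVec z) with ha
    set e := z ⬝ᵥ P.mulVec (E.mulVec dd) with he
    have e1 : y ⬝ᵥ P.mulVec ((A + B * K).mulVec y + E.mulVec dd)
        = r⁻¹ * (r⁻¹ * a) + r⁻¹ * e := by
      rw [hy, Matrix.mulVec_smul, Matrix.mulVec_add, Matrix.mulVec_smul,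
        dotProduct_add, smul_dotProduct, dotProduct_smul,
        smul_dotProduct, smul_eq_mul, smul_eq_mul, smul_eq_mul, ha, he]
      try ring
    have e2 : y ⬝ᵥ P.mulVec ((A + B * K).mulVec y + E.mulVec (-dd))
        = r⁻¹ * (r⁻¹ * a) - r⁻¹ * e := by
      rw [hy, Matrix.mulVec_smul, Matrix.mulVec_neg, Matrix.mulVec_add, Matrix.mulVec_smul,
        Matrix.mulVec_neg, dotProduct_add, smul_dotProduct,
        dotProduct_smul, dotProduct_neg, smul_dotProduct,
        smul_eq_mul, smul_eq_mul, smul_eq_mul, ha, he]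
      try ring
    have h1 := hinv y hy1 dd hdd
    have h2 := hinv y hy1 (-dd) (by simpa using hdd)
    rw [e1] at h1
    rw [e2] at h2
    have ha1 : a + r * e ≤ 0 := by
      have key : a + r * e = (r * r) * (r⁻¹ * (r⁻¹ * a) + r⁻¹ * e) := by
        have : a + r * e = (r * r⁻¹) * (r * r⁻¹) * a + (r * r⁻¹) * (r * e) := by
          rw [hq]; ring
        rw [this]; ring
      rw [key]
      exact mul_nonpos_of_nonneg_of_nonpos (by positivity) h1
    have ha2 : a - r * e ≤ 0 := by
      have key : a - r * e = (r * r) * (r⁻¹ * (r⁻¹ * a) - r⁻¹ * e) := by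
        have : a - r * e = (r * r⁻¹) * (r * r⁻¹) * a - (r * r⁻¹) * (r * e) := by
          rw [hq]; ring
        rw [this]; ring
      rw [key]
      exact mul_nonpos_of_nonneg_of_nonpos (by positivity) h2
    rw [Matrix.mulVec_add, dotProduct_add, ← ha, ← he]
    rcases le_or_gt 0 e with he0 | he0
    · nlinarith
    · nlinarith
  -- the trajectory and Lyapunov function
  have hva : ∀ a b : ℝ, IntervalIntegrable v volume a b :=
    fun a b => (hv_int a).symm.trans (hv_int b)
  have hxc : Continuous x := by
    have : x = fun r => x 0 + ∫ τ in (0:ℝ)..r, v τ := funext hsol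
    rw [this]
    exact continuous_const.add (intervalIntegral.continuous_primitive hva 0)
  set g : ℝ → ℝ := fun r => x r ⬝ᵥ P.mulVec (x r) with hg
  have hgc : Continuous g := hxc.dotProduct (continuous_const.matrix_mulVec hxc)
  intro t1 ht1
  by_contra hgt
  push_neg at hgt
  set S : Set ℝ := Icc (0:ℝ) t1 ∩ {r | g r ≤ 1} with hS
  have hSclosed : IsClosed S := isClosed_Icc.inter (isClosed_le hgc continuous_const)
  have hS0 : (0:ℝ) ∈ S := ⟨⟨le_refl 0, ht1⟩, hx0⟩
  have hSbdd : BddAbove S := ⟨t1, fun r hr => hr.1.2⟩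
  set s₀ := sSup S with hs₀
  have hmem : s₀ ∈ S := hSclosed.csSup_mem ⟨0, hS0⟩ hSbdd
  have hs0 : 0 ≤ s₀ := hmem.1.1
  have hsle : s₀ ≤ t1 := hmem.1.2
  have hgs : g s₀ ≤ 1 := hmem.2
  have hslt : s₀ < t1 := by
    rcases eq_or_lt_of_le hsle with h | h
    · exact absurd (h ▸ hgs) (not_le.2 hgt)
    · exact h
  have hbnd : ∀ τ ∈ Ioc s₀ t1, 1 ≤ g τ := by
    intro τ hτ
    by_contra h
    push_neg at h
    have : τ ∈ S := ⟨⟨hs0.trans hτ.1.le, hτ.2⟩, h.le⟩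
    exact absurd (le_csSup hSbdd this) (not_le.2 hτ.1)
  have hftc := quad_ftc P hva hsol hslt.le
  have hae : ∀ᵐ τ ∂(volume.restrict (Ioc s₀ t1)),
      (v τ ⬝ᵥ P.mulVec (x τ) + x τ ⬝ᵥ P.mulVec (v τ)) ≤ 0 := by
    filter_upwards [ae_restrict_mem measurableSet_Ioc, ae_restrict_of_ae hdyn] with τ hτ hvτ
    have h1 : 1 ≤ g τ := hbnd τ hτ
    rw [hvτ, hdot ((A + B * K).mulVec (x τ) + E.mulVec (d τ)) (x τ)]
    have := hext (x τ) h1 (d τ) (hd_bnd τ)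
    linarith
  have hint : (∫ τ in s₀..t1, (v τ ⬝ᵥ P.mulVec (x τ) + x τ ⬝ᵥ P.mulVec (v τ))) ≤ 0 := by
    rw [intervalIntegral.integral_of_le hslt.le]
    exact integral_nonpos_of_ae hae
  have : g t1 ≤ g s₀ := by
    have := hftc
    rw [hg]
    linarith [hint, hftc]
  linarith
end

section
/- Let P be symmetric positive definite with inverse Q, let Y ∈ ℝ^{m×n}, and set K = YQ⁻¹ = YP. If the block matrix [[AQ + QAᵀ + BY + YᵀBᵀ + λQ, E], [Eᵀ, −λI]] is negative semidefinite for some λ > 0, then for all x ∈ ℝⁿ with xᵀPx = 1 and all d with ‖d‖₂ ≤ 1, xᵀP((A+BK)x + Ed) ≤ 0. -/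
open Matrix

/-- If the LMI [[AQ+QAᵀ+BY+YᵀBᵀ+λQ, E],[Eᵀ, −λI]] ⪯ 0 holds with Q = P⁻¹ and
K = YP, then the Nagumo invariance condition holds on the ellipsoid boundary. -/
theorem lmi_implies_invariance_condition {n m p : ℕ}
    (A : Matrix (Fin n) (Fin n) ℝ) (B : Matrix (Fin n) (Fin m) ℝ)
    (E : Matrix (Fin n) (Fin p) ℝ)
    (P Q : Matrix (Fin n) (Fin n) ℝ) (Y : Matrix (Fin m) (Fin n) ℝ)
    (hP : P.PosDef) (hQ : Q = P⁻¹) (K : Matrix (Fin m) (Fin n) ℝ)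
    (hK : K = Y * P) (lam : ℝ) (hlam : 0 < lam)
    (hLMI : (-(Matrix.fromBlocks
        (A * Q + Q * Aᵀ + B * Y + Yᵀ * Bᵀ + lam • Q) E
        Eᵀ (-(lam • (1 : Matrix (Fin p) (Fin p) ℝ))))).PosSemidef) :
    ∀ x : Fin n → ℝ, x ⬝ᵥ P.mulVec x = 1 →
      ∀ d : Fin p → ℝ, d ⬝ᵥ d ≤ 1 →
        x ⬝ᵥ P.mulVec ((A + B * K).mulVec x + E.mulVec d) ≤ 0 := by
  intro x hx d hd
  have hdet : IsUnit P.det := isUnit_iff_ne_zero.mpr hP.det_pos.ne'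
  have hQP : Q * P = 1 := by rw [hQ]; exact Matrix.nonsing_inv_mul P hdet
  have hPQ : P * Q = 1 := by rw [hQ]; exact Matrix.mul_nonsing_inv P hdet
  have hPsym : Pᵀ = P := hP.1
  have hQsym : Qᵀ = Q := by rw [hQ, Matrix.transpose_nonsing_inv, hPsym]
  set y := P.mulVec x with hy
  have hz := hLMI.dotProduct_mulVec_nonneg (Sum.elim y d)
  rw [star_trivial, Matrix.fromBlocks_neg, Matrix.fromBlocks_mulVec] at hz
  simp only [Sum.elim_comp_inl, Sum.elim_comp_inr, neg_neg,
    sumElim_dotProduct_sumElim, Matrix.neg_mulVec, dotProduct_add,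
    dotProduct_neg] at hz
  have hQy : Q.mulVec y = x := by
    rw [hy, Matrix.mulVec_mulVec, hQP, Matrix.one_mulVec]
  have hsym : ∀ w : Fin n → ℝ, y ⬝ᵥ w = x ⬝ᵥ P.mulVec w := by
    intro w
    rw [Matrix.dotProduct_mulVec, ← Matrix.mulVec_transpose, hPsym, ← hy]
  have htrans : ∀ {a b : ℕ} (N : Matrix (Fin a) (Fin b) ℝ) (u : Fin a → ℝ) (v : Fin b → ℝ),
      u ⬝ᵥ N.mulVec v = v ⬝ᵥ Nᵀ.mulVec u := by
    intro a b N u v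
    rw [Matrix.dotProduct_mulVec, ← Matrix.mulVec_transpose, dotProduct_comm]
  have key : ∀ (M : Matrix (Fin n) (Fin n) ℝ),
      y ⬝ᵥ (M * Q).mulVec y = x ⬝ᵥ (P * M).mulVec x := by
    intro M
    rw [← Matrix.mulVec_mulVec, hQy, hsym, Matrix.mulVec_mulVec]
  have h1 : y ⬝ᵥ (A * Q).mulVec y = x ⬝ᵥ (P * A).mulVec x := key A
  have h2 : y ⬝ᵥ (Q * Aᵀ).mulVec y = x ⬝ᵥ (P * A).mulVec x := by
    rw [htrans, Matrix.transpose_mul, Matrix.transpose_transpose, hQsym]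
    exact h1
  have hBY : B * Y = (B * K) * Q := by
    rw [hK, Matrix.mul_assoc B (Y * P) Q, Matrix.mul_assoc Y P Q, hPQ, Matrix.mul_one]
  have h3 : y ⬝ᵥ (B * Y).mulVec y = x ⬝ᵥ (P * (B * K)).mulVec x := by
    rw [hBY]; exact key (B * K)
  have h4 : y ⬝ᵥ (Yᵀ * Bᵀ).mulVec y = x ⬝ᵥ (P * (B * K)).mulVec x := by
    rw [htrans, Matrix.transpose_mul, Matrix.transpose_transpose, Matrix.transpose_transpose]
    exact h3
  have h5 : y ⬝ᵥ (lam • Q).mulVec y = lam := by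
    rw [Matrix.smul_mulVec, dotProduct_smul, hQy, hy, dotProduct_comm,
      hx, smul_eq_mul, mul_one]
  have h6 : y ⬝ᵥ E.mulVec d = x ⬝ᵥ (P * E).mulVec d := by
    rw [hsym, Matrix.mulVec_mulVec]
  have h7 : d ⬝ᵥ Eᵀ.mulVec y = x ⬝ᵥ (P * E).mulVec d := by
    rw [htrans, Matrix.transpose_transpose]; exact h6
  have h8 : d ⬝ᵥ (lam • (1 : Matrix (Fin p) (Fin p) ℝ)).mulVec d = lam * (d ⬝ᵥ d) := by
    rw [Matrix.smul_mulVec, dotProduct_smul, Matrix.one_mulVec, smul_eq_mul]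
  have hgoal : x ⬝ᵥ P.mulVec ((A + B * K).mulVec x + E.mulVec d)
      = x ⬝ᵥ (P * A).mulVec x + x ⬝ᵥ (P * (B * K)).mulVec x + x ⬝ᵥ (P * E).mulVec d := by
    simp only [Matrix.mulVec_add, dotProduct_add, Matrix.add_mulVec,
      ← Matrix.mulVec_mulVec, Matrix.mul_add]
  have hexp : y ⬝ᵥ (A * Q + Q * Aᵀ + B * Y + Yᵀ * Bᵀ + lam • Q).mulVec y
      = 2 * (x ⬝ᵥ (P * A).mulVec x) + 2 * (x ⬝ᵥ (P * (B * K)).mulVec x) + lam := by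
    simp only [Matrix.add_mulVec, dotProduct_add, h1, h2, h3, h4, h5]
    ring
  rw [hgoal]
  have hrest : 0 ≤ lam - lam * (d ⬝ᵥ d) := by nlinarith
  linarith [hz, hexp, h6, h7, h8]
end
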